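/- Let G be a finite p-group of order p^5 with |Z(G)| = p², nilpotency class 3, and |G'| = p². Then G has an abelian subgroup of index p. -/

import Mathlib

variable {G : Type*}

/-- An automorphism is class-preserving if it sends each element to a conjugate of itself. -/
def IsClassPreserving [Group G] (α : G ≃* G) : Prop :=
  ∀ x : G, ∃ g : G, α x = g⁻¹ * x * g

/-- An automorphism is inner if it is conjugation by a fixed element. -/
def IsInnerAut [Group G] (α : G ≃* G) : Prop :=
  ∃ g : G, ∀ x : G, α x = g⁻¹ * x * g

/-- An automorphism is central if it induces the identity on `G/Z(G)`. -/
def IsCentralAut [Group G] (α : G ≃* G) : Prop :=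
  ∀ x : G, x⁻¹ * α x ∈ Subgroup.center G

open scoped commutatorElement

/-- A group of order p^5 with center of order p², nilpotency class 3 and commutator
subgroup of order p² has an abelian subgroup of index p. -/
theorem stmt_7 (G : Type*) [Group G] [Finite G] (p : ℕ) [Fact p.Prime]
    [Group.IsNilpotent G]
    (hord : Nat.card G = p ^ 5)
    (hZ : Nat.card (Subgroup.center G) = p ^ 2)
    (hclass : Group.nilpotencyClass G = 3)
    (hG' : Nat.card (commutator G) = p ^ 2) :
    ∃ A : Subgroup G, A.index = p ∧ ∀ x ∈ A, ∀ y ∈ A, x * y = y * x := by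
  classical
  have hp : p.Prime := Fact.out
  have hp1 : 1 < p := hp.one_lt
  have hp0 : 0 < p := hp.pos
  -- γ₃ = [G', G]
  set Γ : Subgroup G := ⁅commutator G, (⊤ : Subgroup G)⁆ with hΓdef
  have hlcs2 : Subgroup.lowerCentralSeries (⊤ : Subgroup G) 2 = Γ := rfl
  have hlcs3 : Subgroup.lowerCentralSeries (⊤ : Subgroup G) 3 = ⁅Γ, (⊤ : Subgroup G)⁆ := rfl
  -- γ₃ is central
  have hΓZ : Γ ≤ Subgroup.center G := by
    have h3 : Subgroup.lowerCentralSeries (⊤ : Subgroup G) 3 = ⊥ := by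
      rw [← hclass]; exact Subgroup.lowerCentralSeries_nilpotencyClass
    have h := Subgroup.commutator_eq_bot_iff_le_centralizer.mp (hlcs3 ▸ h3)
    rwa [Subgroup.coe_top, Subgroup.centralizer_univ] at h
  -- γ₃ is nontrivial
  have hΓbot : Γ ≠ ⊥ := by
    intro h
    have h2 : Group.nilpotencyClass G ≤ 2 :=
      Subgroup.lowerCentralSeries_eq_bot_iff_nilpotencyClass_le.mp (by rw [hlcs2]; exact h)
    omega
  -- G' is not central
  have hKZ : ¬ commutator G ≤ Subgroup.center G := by
    intro h
    exact hΓbot (Subgroup.commutator_eq_bot_iff_le_centralizer.mpr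
      (by rw [Subgroup.coe_top, Subgroup.centralizer_univ]; exact h))
  have hΓle : Γ ≤ commutator G := Subgroup.commutator_le_left _ _
  -- |γ₃| = p
  have hΓcard : Nat.card Γ = p := by
    have hd : Nat.card Γ ∣ p ^ 2 := hG' ▸ Subgroup.card_dvd_of_le hΓle
    obtain ⟨i, hi2, hie⟩ := (Nat.dvd_prime_pow hp).mp hd
    interval_cases i
    · exact absurd (Subgroup.card_eq_one.mp (by simpa using hie)) hΓbot
    · simpa using hie
    · exfalso
      apply hKZ
      have hEq : Γ = commutator G := Subgroup.eq_of_le_of_card_ge hΓle (by rw [hG', hie])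
      exact hEq ▸ hΓZ
  -- pick a non-central element of G'
  obtain ⟨a, haK, haZ⟩ := SetLike.not_le_iff_exists.mp hKZ
  -- G' = ⟨a⟩ ⊔ γ₃
  have hHK : Subgroup.closure {a} ⊔ Γ = commutator G := by
    have hHle : Subgroup.closure {a} ⊔ Γ ≤ commutator G :=
      sup_le ((Subgroup.closure_le _).mpr (by simpa using haK)) hΓle
    have hΓH : Γ ≤ Subgroup.closure {a} ⊔ Γ := le_sup_right
    have hd : Nat.card (Subgroup.closure {a} ⊔ Γ : Subgroup G) ∣ p ^ 2 :=
      hG' ▸ Subgroup.card_dvd_of_le hHle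
    obtain ⟨i, hi2, hie⟩ := (Nat.dvd_prime_pow hp).mp hd
    have hpH : p ∣ Nat.card (Subgroup.closure {a} ⊔ Γ : Subgroup G) :=
      hΓcard ▸ Subgroup.card_dvd_of_le hΓH
    interval_cases i
    · rw [pow_zero] at hie
      rw [hie] at hpH
      have := Nat.le_of_dvd one_pos hpH
      omega
    · exfalso
      have hEq : Γ = Subgroup.closure {a} ⊔ Γ :=
        Subgroup.eq_of_le_of_card_ge hΓH (by rw [hΓcard, hie, pow_one])
      exact haZ (hΓZ (hEq ▸ Subgroup.mem_sup_left (Subgroup.subset_closure rfl)))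
    · exact Subgroup.eq_of_le_of_card_ge hHle (by rw [hG', hie])
  -- centralizer of a is contained in the centralizer of G'
  have hCaC : Subgroup.centralizer {a} ≤ Subgroup.centralizer (commutator G : Set G) := by
    intro g hg
    have hga : g * a = a * g := Subgroup.mem_centralizer_singleton_iff.mp hg
    rw [Subgroup.mem_centralizer_iff]
    intro h hh
    have hh' : h ∈ Subgroup.closure ({a} ∪ (Γ : Set G)) := by
      rw [Subgroup.closure_union, Subgroup.closure_eq, hHK]
      exact hh
    clear hh
    induction hh' using Subgroup.closure_induction with
    | mem y hy =>
      rcases hy with hy | hy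
      · rw [Set.mem_singleton_iff] at hy
        rw [hy]; exact hga.symm
      · exact (Subgroup.mem_center_iff.mp (hΓZ hy) g).symm
    | one => simp
    | mul y z _ _ hy hz => rw [mul_assoc, hz, ← mul_assoc, hy, mul_assoc]
    | inv y _ hy =>
      have : Commute y g := hy
      exact this.inv_left.eq
  -- the commutator map into γ₃ bounds the index of the centralizer of a
  have hindex : (Subgroup.centralizer {a} : Subgroup G).index ≤ p := by
    have hmem : ∀ g : G, ⁅a, g⁆ ∈ Γ := fun g =>
      Subgroup.commutator_mem_commutator haK (Subgroup.mem_top g)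
    let φ : G → Γ := fun g => ⟨⁅a, g⁆, hmem g⟩
    have hφ : ∀ g c : G, a * c = c * a → φ (g * c) = φ g := by
      intro g c hc
      have hcac : c * a⁻¹ * c⁻¹ = a⁻¹ := by
        have h2 : Commute c a⁻¹ := (Commute.symm hc).inv_right
        rw [h2.eq, mul_inv_cancel_right]
      apply Subtype.ext
      show ⁅a, g * c⁆ = ⁅a, g⁆
      have h3 : ⁅a, g * c⁆ = a * g * (c * a⁻¹ * c⁻¹) * g⁻¹ := by group
      rw [h3, hcac]
      group
    let f : (G ⧸ (Subgroup.centralizer {a} : Subgroup G)) → Γ := fun q =>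
      Quotient.liftOn' q φ (by
        intro g h hrel
        rw [QuotientGroup.leftRel_apply] at hrel
        have hc : a * (g⁻¹ * h) = (g⁻¹ * h) * a :=
          (Subgroup.mem_centralizer_singleton_iff.mp hrel).symm
        have h4 := hφ g (g⁻¹ * h) hc
        rw [mul_inv_cancel_left] at h4
        exact h4.symm)
    have finj : Function.Injective f := by
      intro q1 q2
      refine Quotient.inductionOn₂' q1 q2 ?_
      intro g h e
      have e' : ⁅a, g⁆ = ⁅a, h⁆ := congrArg Subtype.val e
      apply Quotient.sound'
      rw [QuotientGroup.leftRel_apply, Subgroup.mem_centralizer_singleton_iff]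
      rw [commutatorElement_def, commutatorElement_def] at e'
      have h3 : g * a⁻¹ * g⁻¹ = h * a⁻¹ * h⁻¹ := by
        calc g * a⁻¹ * g⁻¹ = a⁻¹ * (a * g * a⁻¹ * g⁻¹) := by group
        _ = a⁻¹ * (a * h * a⁻¹ * h⁻¹) := by rw [e']
        _ = h * a⁻¹ * h⁻¹ := by group
      have h4 : a⁻¹ * (g⁻¹ * h) = (g⁻¹ * h) * a⁻¹ := by
        calc a⁻¹ * (g⁻¹ * h) = g⁻¹ * (g * a⁻¹ * g⁻¹) * h := by group
        _ = g⁻¹ * (h * a⁻¹ * h⁻¹) * h := by rw [h3]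
        _ = (g⁻¹ * h) * a⁻¹ := by group
      have h5 : Commute a⁻¹ (g⁻¹ * h) := h4
      have h6 := h5.inv_left
      rw [inv_inv] at h6
      exact h6.symm.eq
    calc (Subgroup.centralizer {a} : Subgroup G).index
        = Nat.card (G ⧸ (Subgroup.centralizer {a} : Subgroup G)) := rfl
      _ ≤ Nat.card Γ := Nat.card_le_card_of_injective f finj
      _ = p := hΓcard
  -- the centralizer C of G' has index exactly p
  have hCtop : Subgroup.centralizer (commutator G : Set G) ≠ ⊤ := by
    intro h
    exact hKZ fun y hy => Subgroup.centralizer_eq_top_iff_subset.mp h hy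
  have hCa_ne : (Subgroup.centralizer {a} : Subgroup G).index ≠ 0 :=
    Subgroup.index_ne_zero_of_finite
  have hCle : (Subgroup.centralizer (commutator G : Set G)).index ≤ p :=
    le_trans (Nat.le_of_dvd (Nat.pos_of_ne_zero hCa_ne) (Subgroup.index_dvd_of_le hCaC)) hindex
  have hCne1 : (Subgroup.centralizer (commutator G : Set G)).index ≠ 1 := fun h =>
    hCtop (Subgroup.index_eq_one.mp h)
  have hCdvd : (Subgroup.centralizer (commutator G : Set G)).index ∣ p ^ 5 :=
    hord ▸ Subgroup.index_dvd_card _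
  have hCp : (Subgroup.centralizer (commutator G : Set G)).index = p := by
    obtain ⟨j, hj5, hje⟩ := (Nat.dvd_prime_pow hp).mp hCdvd
    rcases j with _ | j
    · rw [pow_zero] at hje; exact absurd hje hCne1
    · have h1 : p ^ (j + 1) ≤ p ^ 1 := by rw [pow_one, ← hje]; exact hCle
      have h2 : j + 1 ≤ 1 := (Nat.pow_le_pow_iff_right hp1).mp h1
      have h3 : j = 0 := by omega
      rw [hje, h3, pow_one]
  have hCcard : Nat.card (Subgroup.centralizer (commutator G : Set G)) = p ^ 4 := by
    have h := Subgroup.card_mul_index (Subgroup.centralizer (commutator G : Set G))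
    rw [hCp, hord] at h
    have h2 : Nat.card (Subgroup.centralizer (commutator G : Set G)) * p = p ^ 4 * p := by
      rw [h]; ring
    exact Nat.eq_of_mul_eq_mul_right hp0 h2
  -- G' is abelian hence inside C; so is the center
  have hKcomm : ∀ x y : (commutator G), x * y = y * x :=
    IsPGroup.commutative_of_card_eq_prime_sq hG'
  have hKC : commutator G ≤ Subgroup.centralizer (commutator G : Set G) := by
    intro k hk
    rw [Subgroup.mem_centralizer_iff]
    intro h hh
    exact congrArg Subtype.val (hKcomm ⟨h, hh⟩ ⟨k, hk⟩)
  have hZC : Subgroup.center G ≤ Subgroup.centralizer (commutator G : Set G) :=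
    Subgroup.center_le_centralizer _
  have hBC : commutator G ⊔ Subgroup.center G ≤ Subgroup.centralizer (commutator G : Set G) :=
    sup_le hKC hZC
  -- |Z ∩ G'| = p
  have hZK : Nat.card (Subgroup.center G ⊓ commutator G : Subgroup G) = p := by
    have hle1 : Γ ≤ Subgroup.center G ⊓ commutator G := le_inf hΓZ hΓle
    have hd : Nat.card (Subgroup.center G ⊓ commutator G : Subgroup G) ∣ p ^ 2 :=
      hG' ▸ Subgroup.card_dvd_of_le inf_le_right
    obtain ⟨i, hi2, hie⟩ := (Nat.dvd_prime_pow hp).mp hd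
    have hpd : p ∣ Nat.card (Subgroup.center G ⊓ commutator G : Subgroup G) :=
      hΓcard ▸ Subgroup.card_dvd_of_le hle1
    interval_cases i
    · rw [pow_zero] at hie
      rw [hie] at hpd
      have := Nat.le_of_dvd one_pos hpd
      omega
    · simpa using hie
    · exfalso
      apply hKZ
      have hEq : Subgroup.center G ⊓ commutator G = commutator G :=
        Subgroup.eq_of_le_of_card_ge inf_le_right (by rw [hG', hie])
      exact (le_of_eq hEq.symm).trans inf_le_left
  -- |G' ⊔ Z| = p^3
  have hBcard : Nat.card (commutator G ⊔ Subgroup.center G : Subgroup G) = p ^ 3 := by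
    have hZB : Subgroup.center G ≤ commutator G ⊔ Subgroup.center G := le_sup_right
    have h1 := Subgroup.card_mul_index
      ((Subgroup.center G).subgroupOf (commutator G ⊔ Subgroup.center G))
    have h2 : Nat.card ((Subgroup.center G).subgroupOf (commutator G ⊔ Subgroup.center G))
        = p ^ 2 := by
      rw [← hZ]
      exact Nat.card_congr (Subgroup.subgroupOfEquivOfLe hZB).toEquiv
    have h5 : (Subgroup.center G).relIndex (commutator G) = p := by
      have h6 := Subgroup.card_mul_index
        (((Subgroup.center G) ⊓ commutator G).subgroupOf (commutator G))
      rw [Subgroup.inf_subgroupOf_right] at h6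
      have h7 : Nat.card ((Subgroup.center G).subgroupOf (commutator G)) = p := by
        rw [← Subgroup.inf_subgroupOf_right, ← hZK]
        exact Nat.card_congr (Subgroup.subgroupOfEquivOfLe
          (inf_le_right : Subgroup.center G ⊓ commutator G ≤ commutator G)).toEquiv
      rw [h7, hG', pow_two] at h6
      exact Nat.eq_of_mul_eq_mul_left hp0 h6
    have h4 : (Subgroup.center G).relIndex (commutator G ⊔ Subgroup.center G)
        = (Subgroup.center G).relIndex (commutator G) :=
      Subgroup.relIndex_sup_right _ _
    rw [h2, show ((Subgroup.center G).subgroupOf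
        (commutator G ⊔ Subgroup.center G)).index = p from h4.trans h5] at h1
    rw [← h1]; ring
  -- there is x ∈ C outside G'Z
  have hBneC : ∃ x ∈ Subgroup.centralizer (commutator G : Set G),
      x ∉ commutator G ⊔ Subgroup.center G := by
    rw [← SetLike.not_le_iff_exists]
    intro hCB
    have h := Subgroup.card_le_of_le hCB
    rw [hBcard, hCcard] at h
    exact absurd h (not_le.mpr (Nat.pow_lt_pow_right hp1 (by norm_num)))
  obtain ⟨x, hxC, hxB⟩ := hBneC
  -- the abelian subgroup
  set S : Set G := ((commutator G : Set G) ∪ (Subgroup.center G : Set G)) ∪ {x} with hSdef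
  have hSsub : S ⊆ (Subgroup.centralizer (commutator G : Set G) : Set G) := by
    intro s hs
    rcases hs with (hs | hs) | hs
    · exact hKC hs
    · exact hZC hs
    · rw [Set.mem_singleton_iff] at hs; rw [hs]; exact hxC
  have hScomm : ∀ s ∈ S, ∀ t ∈ S, s * t = t * s := by
    intro s hs t ht
    rcases ht with (ht | ht) | ht
    · exact (Subgroup.mem_centralizer_iff.mp (hSsub hs) t ht).symm
    · exact Subgroup.mem_center_iff.mp ht s
    · rw [Set.mem_singleton_iff] at ht
      rw [ht]
      rcases hs with (hs | hs) | hs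
      · exact Subgroup.mem_centralizer_iff.mp hxC s hs
      · exact (Subgroup.mem_center_iff.mp hs x).symm
      · rw [Set.mem_singleton_iff] at hs; rw [hs]
  have hcomm : ∀ y ∈ Subgroup.closure S, ∀ z ∈ Subgroup.closure S, y * z = z * y := by
    have hS1 : Subgroup.closure S ≤ Subgroup.centralizer S :=
      (Subgroup.closure_le _).mpr fun s hs =>
        Subgroup.mem_centralizer_iff.mpr fun t ht => hScomm t ht s hs
    intro y hy z hz
    have h1 := Subgroup.closure_le_centralizer_centralizer S hy
    exact (Subgroup.mem_centralizer_iff.mp h1 z (hS1 hz)).symm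
  have hKA : commutator G ≤ Subgroup.closure S := fun k hk =>
    Subgroup.subset_closure (Or.inl (Or.inl hk))
  have hZA : Subgroup.center G ≤ Subgroup.closure S := fun k hk =>
    Subgroup.subset_closure (Or.inl (Or.inr hk))
  have hxA : x ∈ Subgroup.closure S := Subgroup.subset_closure (Or.inr rfl)
  have hBA : commutator G ⊔ Subgroup.center G ≤ Subgroup.closure S := sup_le hKA hZA
  have hAC : Subgroup.closure S ≤ Subgroup.centralizer (commutator G : Set G) :=
    (Subgroup.closure_le _).mpr hSsub
  have hA4 : Nat.card (Subgroup.closure S) = p ^ 4 := by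
    have hle : Nat.card (Subgroup.closure S) ≤ p ^ 4 := hCcard ▸ Subgroup.card_le_of_le hAC
    have hgt : p ^ 3 < Nat.card (Subgroup.closure S) := by
      have hle2 : Nat.card (commutator G ⊔ Subgroup.center G : Subgroup G)
          ≤ Nat.card (Subgroup.closure S) := Subgroup.card_le_of_le hBA
      rw [hBcard] at hle2
      rcases lt_or_eq_of_le hle2 with h | h
      · exact h
      · exfalso
        apply hxB
        have hEq : commutator G ⊔ Subgroup.center G = Subgroup.closure S :=
          Subgroup.eq_of_le_of_card_ge hBA (by rw [hBcard, ← h])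
        rw [hEq]
        exact hxA
    have hdvd : Nat.card (Subgroup.closure S) ∣ p ^ 5 :=
      hord ▸ Subgroup.card_subgroup_dvd_card _
    obtain ⟨i, hi5, hie⟩ := (Nat.dvd_prime_pow hp).mp hdvd
    rw [hie] at hgt hle ⊢
    have h1 : 3 < i := (Nat.pow_lt_pow_iff_right hp1).mp hgt
    have h2 : i ≤ 4 := (Nat.pow_le_pow_iff_right hp1).mp hle
    rw [show i = 4 by omega]
  refine ⟨Subgroup.closure S, ?_, hcomm⟩
  have h := Subgroup.card_mul_index (Subgroup.closure S)
  rw [hA4, hord] at h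
  have h2 : p ^ 4 * (Subgroup.closure S).index = p ^ 4 * p := by rw [h]; ring
  exact Nat.eq_of_mul_eq_mul_left (by positivity) h2
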